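/- (Truncated version of the replacement-path decomposition.) With ‖p‖_r := min(‖p‖, r), under the same hypotheses as the replacement-path decomposition (f strictly between consecutive key vertices k_i, k_{i+1} on the shortest path uv, and y a vertex of [k_i,k_{i+1}] maximizing d_r(u,v,y) where d_r(u,v,x) := min(d(u,v,x), r)): d_r(u,v,f) = min{ d_r(u,k_{i+1},f) + d(k_{i+1},v), d(u,k_i) + d_r(k_i,v,f), d_r(u,v,y), r }. -/

import Mathlib

variable {V : Type*} [DecidableEq V]
set_option linter.unusedSectionVars false


/-- `p` is a walk from `u` to `v` using edges of `E` (given as a list of vertices). -/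
def IsWalk (E : Finset (V × V)) (u v : V) (p : List V) : Prop :=
  p.head? = some u ∧ p.getLast? = some v ∧ p.Chain' (fun a b => (a, b) ∈ E)

/-- The edges of a path given as a list of vertices. -/
def pathEdges (p : List V) : List (V × V) := p.zip p.tail

/-- Total weight of a path. -/
def wt (w : V × V → ℕ) (p : List V) : ℕ := ((pathEdges p).map w).sum

/-- `p` is a shortest walk from `u` to `v` in the graph with edge set `E` and weights `w`. -/
def IsShortest (E : Finset (V × V)) (w : V × V → ℕ) (u v : V) (p : List V) : Prop :=
  IsWalk E u v p ∧ ∀ q, IsWalk E u v q → wt w p ≤ wt w q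

/-- `e` is the bottleneck (`≺`-smallest) edge of the path `p`. -/
def IsBottleneck [LinearOrder (V × V)] (p : List V) (e : V × V) : Prop :=
  e ∈ pathEdges p ∧ ∀ e' ∈ pathEdges p, e ≤ e'

/-- `e = w_{G'}(u,v)`: the `≺`-largest edge that is the bottleneck edge of some
shortest `u → v` path. -/
def IsMaxBottleneck [LinearOrder (V × V)] (E : Finset (V × V)) (w : V × V → ℕ)
    (u v : V) (e : V × V) : Prop :=
  (∃ p, IsShortest E w u v p ∧ IsBottleneck p e) ∧
  ∀ e', (∃ p, IsShortest E w u v p ∧ IsBottleneck p e') → e' ≤ e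

/-- `ρ` is the canonical shortest-path function: `ρ u u` is the trivial path, and
for `u ≠ v` (with `v` reachable from `u`), `ρ u v` is a shortest path obtained by
concatenating `ρ u u⋆`, the edge `w_{G'}(u,v) = (u⋆, v⋆)`, and `ρ v⋆ v`. -/
def IsCanonical [LinearOrder (V × V)] (E : Finset (V × V)) (w : V × V → ℕ)
    (ρ : V → V → List V) : Prop :=
  (∀ u, ρ u u = [u]) ∧
  (∀ u v, u ≠ v → (∃ p, IsWalk E u v p) →
    IsShortest E w u v (ρ u v) ∧
    ∃ e, IsMaxBottleneck E w u v e ∧ ρ u v = ρ u e.1 ++ ρ e.2 v)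

/-- Shortest-path distance in the graph `(E, w)`, `⊤` if unreachable. -/
noncomputable def gdist (E : Finset (V × V)) (w : V × V → ℕ) (u v : V) : ℕ∞ :=
  sInf {n : ℕ∞ | ∃ p, IsWalk E u v p ∧ (wt w p : ℕ∞) = n}

/-- Remove a failed vertex or edge from the edge set. -/
def removeF (E : Finset (V × V)) (f : V ⊕ (V × V)) : Finset (V × V) :=
  match f with
  | Sum.inl x => E.filter (fun e => e.1 ≠ x ∧ e.2 ≠ x)
  | Sum.inr e0 => E.erase e0


section AuxLemmas

-- basic list lemmas
lemma pathEdges_nil : pathEdges ([] : List V) = [] := rfl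
lemma pathEdges_single (a : V) : pathEdges [a] = [] := rfl
lemma pathEdges_cons_cons (a b : V) (l : List V) :
    pathEdges (a :: b :: l) = (a, b) :: pathEdges (b :: l) := rfl

lemma pathEdges_append (l₁ : List V) (x : V) (l₂ : List V) :
    pathEdges (l₁ ++ x :: l₂) = pathEdges (l₁ ++ [x]) ++ pathEdges (x :: l₂) := by
  induction l₁ with
  | nil => simp [pathEdges_single]
  | cons a t ih =>
    cases t with
    | nil => simp [pathEdges_cons_cons, pathEdges_single]
    | cons b t' =>
      simp only [List.cons_append, pathEdges_cons_cons] at *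
      rw [ih]

lemma wt_split (w : V × V → ℕ) (l₁ : List V) (x : V) (l₂ : List V) :
    wt w (l₁ ++ x :: l₂) = wt w (l₁ ++ [x]) + wt w (x :: l₂) := by
  unfold wt
  rw [pathEdges_append, List.map_append, List.sum_append]

lemma mem_left_of_pathEdges {e : V × V} {l : List V} (h : e ∈ pathEdges l) :
    e.1 ∈ l.dropLast := by
  induction l with
  | nil => simp [pathEdges_nil] at h
  | cons a t ih =>
    cases t with
    | nil => simp [pathEdges_single] at h
    | cons b t' =>
      rw [pathEdges_cons_cons] at h
      rcases List.mem_cons.mp h with h | h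
      · subst h; simp
      · have := ih h
        simp only [List.dropLast_cons₂]  at *
        exact List.mem_cons_of_mem _ this

lemma mem_of_pathEdges {e : V × V} {l : List V} (h : e ∈ pathEdges l) :
    e.1 ∈ l ∧ e.2 ∈ l := by
  obtain ⟨h1, h2⟩ := List.of_mem_zip (by exact (Prod.mk.eta ▸ h : (e.1, e.2) ∈ l.zip l.tail))
  exact ⟨h1, List.mem_of_mem_tail h2⟩

lemma mem_right_of_pathEdges {e : V × V} {l : List V} (h : e ∈ pathEdges l) :
    e.2 ∈ l.tail :=
  (List.of_mem_zip (by exact (Prod.mk.eta ▸ h : (e.1, e.2) ∈ l.zip l.tail))).2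

lemma chain'_pathEdges {R : V → V → Prop} {l : List V} (h : l.Chain' R) :
    ∀ e ∈ pathEdges l, R e.1 e.2 := by
  induction l with
  | nil => simp [pathEdges_nil]
  | cons a t ih =>
    cases t with
    | nil => simp [pathEdges_single]
    | cons b t' =>
      rw [pathEdges_cons_cons]
      rintro e he
      rcases List.mem_cons.mp he with rfl | he
      · exact (List.isChain_cons_cons.mp h).1
      · exact ih (List.isChain_cons_cons.mp h).2 e he

lemma pathEdges_chain' {R : V → V → Prop} {l : List V} (h : ∀ e ∈ pathEdges l, R e.1 e.2) :
    l.Chain' R := by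
  induction l with
  | nil => exact List.isChain_nil
  | cons a t ih =>
    cases t with
    | nil => exact List.isChain_singleton _
    | cons b t' =>
      rw [List.Chain', List.isChain_cons_cons]
      refine ⟨h (a, b) (by rw [pathEdges_cons_cons]; exact List.mem_cons_self), ?_⟩
      exact ih fun e he => h e (by rw [pathEdges_cons_cons]; exact List.mem_cons_of_mem _ he)

-- walk lemmas
lemma walk_split {E : Finset (V × V)} {u v : V} {l₁ : List V} {x : V} {l₂ : List V}
    (h : IsWalk E u v (l₁ ++ x :: l₂)) :
    IsWalk E u x (l₁ ++ [x]) ∧ IsWalk E x v (x :: l₂) := by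
  obtain ⟨hh, hl, hc⟩ := h
  have hc' : (((l₁ ++ [x]) ++ l₂)).Chain' (fun a b => (a, b) ∈ E) := by
    simpa using hc
  rw [List.Chain', List.isChain_append] at hc'
  have hc2 : (x :: l₂).Chain' (fun a b => (a, b) ∈ E) := by
    rcases l₂ with _ | ⟨b, t⟩
    · exact List.isChain_singleton _
    · rw [List.Chain', List.isChain_cons_cons]
      refine ⟨?_, hc'.2.1⟩
      exact hc'.2.2 x (by simp) b (by simp)
  refine ⟨⟨?_, by simp, hc'.1⟩, ⟨rfl, ?_, hc2⟩⟩
  · rw [← hh]; cases l₁ <;> simp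
  · rw [← hl, List.getLast?_append_cons]

lemma walk_join {E : Finset (V × V)} {u v : V} {l₁ : List V} {x : V} {l₂ : List V}
    (h1 : IsWalk E u x (l₁ ++ [x])) (h2 : IsWalk E x v (x :: l₂)) :
    IsWalk E u v (l₁ ++ x :: l₂) := by
  obtain ⟨hh1, _, hc1⟩ := h1
  obtain ⟨_, hl2, hc2⟩ := h2
  refine ⟨?_, ?_, ?_⟩
  · rw [← hh1]; cases l₁ <;> simp
  · rw [List.getLast?_append_cons]; exact hl2
  · have : ((l₁ ++ [x]) ++ l₂).Chain' (fun a b => (a, b) ∈ E) := by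
      rw [List.Chain', List.isChain_append]
      refine ⟨hc1, List.IsChain.tail hc2, ?_⟩
      intro a ha b hb
      rcases l₂ with _ | ⟨c, t⟩
      · simp at hb
      · simp only [List.getLast?_concat, Option.mem_some_iff] at ha
        simp only [List.head?_cons, Option.mem_some_iff] at hb
        subst ha; subst hb
        exact (List.isChain_cons_cons.mp hc2).1
    simpa using this

lemma walk_decomp_last {E : Finset (V × V)} {u v : V} {q : List V}
    (h : IsWalk E u v q) : ∃ q', q = q' ++ [v] := by
  obtain ⟨_, hl, _⟩ := h
  obtain ⟨q', hq'⟩ := List.getLast?_eq_some_iff.mp hl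
  exact ⟨q', hq'⟩

lemma walk_decomp_head {E : Finset (V × V)} {u v : V} {q : List V}
    (h : IsWalk E u v q) : ∃ q', q = u :: q' := by
  obtain ⟨hh, _, _⟩ := h
  rcases q with _ | ⟨a, t⟩
  · simp at hh
  · exact ⟨t, by simp_all⟩

-- gdist lemmas
lemma gdist_le_wt {E : Finset (V × V)} {w : V × V → ℕ} {u v : V} {q : List V}
    (h : IsWalk E u v q) : gdist E w u v ≤ (wt w q : ℕ∞) :=
  sInf_le ⟨q, h, rfl⟩

lemma walk_mono {E₁ E₂ : Finset (V × V)} (hE : E₁ ⊆ E₂) {u v : V} {q : List V}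
    (h : IsWalk E₁ u v q) : IsWalk E₂ u v q :=
  ⟨h.1, h.2.1, h.2.2.imp fun _ _ hab => hE hab⟩

lemma gdist_mono {E₁ E₂ : Finset (V × V)} (hE : E₁ ⊆ E₂) (w : V × V → ℕ) (u v : V) :
    gdist E₂ w u v ≤ gdist E₁ w u v := by
  apply le_sInf
  rintro n ⟨q, hq, rfl⟩
  exact gdist_le_wt (walk_mono hE hq)

lemma removeF_subset (E : Finset (V × V)) (f : V ⊕ (V × V)) : removeF E f ⊆ E := by
  cases f with
  | inl x => exact Finset.filter_subset _ _
  | inr e0 => exact Finset.erase_subset _ _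

lemma gdist_eq_of_shortest {E : Finset (V × V)} {w : V × V → ℕ} {u v : V} {q : List V}
    (h : IsShortest E w u v q) : gdist E w u v = (wt w q : ℕ∞) := by
  refine le_antisymm (gdist_le_wt h.1) (le_sInf ?_)
  rintro n ⟨q', hq', rfl⟩
  exact_mod_cast h.2 q' hq'

lemma gdist_exists {E : Finset (V × V)} {w : V × V → ℕ} {u v : V}
    (h : gdist E w u v ≠ ⊤) :
    ∃ q, IsWalk E u v q ∧ (wt w q : ℕ∞) = gdist E w u v := by
  have hne : {n : ℕ∞ | ∃ p, IsWalk E u v p ∧ (wt w p : ℕ∞) = n}.Nonempty := by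
    by_contra hc
    rw [Set.not_nonempty_iff_eq_empty] at hc
    rw [gdist, hc] at h
    simp at h
  obtain ⟨_, q₁, hq₁, rfl⟩ := hne
  set S : Set ℕ := {n : ℕ | ∃ q, IsWalk E u v q ∧ wt w q = n} with hS
  have hSne : S.Nonempty := ⟨wt w q₁, q₁, hq₁, rfl⟩
  obtain ⟨q₀, hq₀, hwt₀⟩ := Nat.sInf_mem hSne
  refine ⟨q₀, hq₀, le_antisymm (le_sInf ?_) (gdist_le_wt hq₀)⟩
  rintro n ⟨q', hq', rfl⟩
  have : sInf S ≤ wt w q' := Nat.sInf_le ⟨q', hq', rfl⟩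
  exact_mod_cast hwt₀ ▸ this

-- walks avoiding failures
lemma pathEdges_subset_of_walk {E : Finset (V × V)} {u v : V} {q : List V}
    (h : IsWalk E u v q) : ∀ e ∈ pathEdges q, e ∈ E :=
  chain'_pathEdges h.2.2

lemma walk_removeF_vertex {E : Finset (V × V)} {u v x : V} {q : List V}
    (h : IsWalk E u v q) (hx : x ∉ q) : IsWalk (removeF E (Sum.inl x)) u v q := by
  refine ⟨h.1, h.2.1, pathEdges_chain' fun e he => ?_⟩
  have hE := pathEdges_subset_of_walk h e he
  have h1 := (mem_of_pathEdges he).1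
  have h2 := (mem_of_pathEdges he).2
  simp only [removeF, Finset.mem_filter]
  exact ⟨hE, fun hh => hx (hh ▸ h1), fun hh => hx (hh ▸ h2)⟩

lemma walk_removeF_edge {E : Finset (V × V)} {u v : V} {e0 : V × V} {q : List V}
    (h : IsWalk E u v q) (he0 : e0 ∉ pathEdges q) : IsWalk (removeF E (Sum.inr e0)) u v q := by
  refine ⟨h.1, h.2.1, pathEdges_chain' fun e he => ?_⟩
  have hE := pathEdges_subset_of_walk h e he
  simp only [removeF, Finset.mem_erase]
  exact ⟨fun hh => he0 (hh ▸ he), hE⟩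

lemma exists_dup_split {l : List V} (h : ¬ l.Nodup) :
    ∃ (a : List V) (x : V) (b c : List V), l = a ++ x :: (b ++ x :: c) := by
  induction l with
  | nil => simp at h
  | cons hd t ih =>
    by_cases hm : hd ∈ t
    · obtain ⟨b, c, rfl⟩ := List.append_of_mem hm
      exact ⟨[], hd, b, c, rfl⟩
    · have ht : ¬ t.Nodup := by
        intro hn
        exact h (List.nodup_cons.mpr ⟨hm, hn⟩)
      obtain ⟨a, x, b, c, h'⟩ := ih ht
      exact ⟨hd :: a, x, b, c, by simp [h']⟩

lemma wt_pos {E : Finset (V × V)} {w : V × V → ℕ} (hw : ∀ e ∈ E, 1 ≤ w e)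
    {a b : V} {t : List V} (hE : ∀ e ∈ pathEdges (a :: b :: t), e ∈ E) :
    1 ≤ wt w (a :: b :: t) := by
  rw [wt, pathEdges_cons_cons]
  have : 1 ≤ w (a, b) := hw _ (hE (a, b) (by rw [pathEdges_cons_cons]; exact List.mem_cons_self))
  simp only [List.map_cons, List.sum_cons]
  omega

lemma nodup_of_shortest {E : Finset (V × V)} {w : V × V → ℕ} (hw : ∀ e ∈ E, 1 ≤ w e)
    {u v : V} {p : List V} (h : IsShortest E w u v p) : p.Nodup := by
  by_contra hc
  obtain ⟨a, x, b, c, rfl⟩ := exists_dup_split hc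
  obtain ⟨h1, h2⟩ := walk_split h.1
  have h2' : IsWalk E x v ((x :: b) ++ x :: c) := h2
  obtain ⟨h3, h4⟩ := walk_split h2'
  have hq : IsWalk E u v (a ++ x :: c) := walk_join h1 h4
  have hle := h.2 _ hq
  have hwt1 : wt w (a ++ x :: (b ++ x :: c)) =
      wt w (a ++ [x]) + wt w (x :: (b ++ x :: c)) := wt_split w a x _
  have hwt2 : wt w ((x :: b) ++ x :: c) =
      wt w ((x :: b) ++ [x]) + wt w (x :: c) := wt_split w (x :: b) x c
  have hwt3 : wt w (a ++ x :: c) = wt w (a ++ [x]) + wt w (x :: c) := wt_split w a x c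
  have hmidpos : 1 ≤ wt w ((x :: b) ++ [x]) := by
    rcases b with _ | ⟨b0, bt⟩
    · exact wt_pos hw (pathEdges_subset_of_walk h3)
    · exact wt_pos hw (pathEdges_subset_of_walk h3)
  have : wt w ((x :: b) ++ x :: c) = wt w (x :: (b ++ x :: c)) := rfl
  omega

lemma head?_append_cons' (A : List V) (x : V) (B : List V) :
    (A ++ x :: B).head? = (A ++ [x]).head? := by cases A <;> simp

lemma mem_of_head?_append {A B : List V} {u : V} (hA : A ≠ []) (h : (A ++ B).head? = some u) :
    u ∈ A := by
  cases A with
  | nil => exact absurd rfl hA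
  | cons a t => simp at h; subst h; simp

lemma nodup_disj {l₁ l₂ : List V} (h : (l₁ ++ l₂).Nodup) :
    ∀ x ∈ l₁, x ∉ l₂ := fun x hx hx2 => (List.nodup_append'.mp h).2.2 hx hx2

lemma split_bound {E' E : Finset (V × V)} (hE : E' ⊆ E) {w : V × V → ℕ} {u v m : V}
    {Q₁ Q₂ : List V} (hW : IsWalk E' u v (Q₁ ++ m :: Q₂)) :
    gdist E' w u m + gdist E w m v ≤ (wt w (Q₁ ++ m :: Q₂) : ℕ∞) ∧
    gdist E w u m + gdist E' w m v ≤ (wt w (Q₁ ++ m :: Q₂) : ℕ∞) := by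
  obtain ⟨h1, h2⟩ := walk_split hW
  rw [wt_split w Q₁ m Q₂]
  push_cast
  constructor
  · exact add_le_add (gdist_le_wt h1) (gdist_le_wt (walk_mono hE h2))
  · exact add_le_add (gdist_le_wt (walk_mono hE h1)) (gdist_le_wt h2)

end AuxLemmas

set_option maxHeartbeats 1000000 in
theorem stmt12 (E : Finset (V × V)) (w : V × V → ℕ) (hw : ∀ e ∈ E, 1 ≤ w e)
    (r : ℕ) (hr : 1 ≤ r)
    (u v ki ki1 : V) (p1 p2 p3 : List V) (p : List V)
    (hp : p = p1 ++ [ki] ++ p2 ++ [ki1] ++ p3)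
    (hshort : IsShortest E w u v p)
    (hcons : ∀ a m b : List V, p = a ++ m ++ b → ∀ x y : V,
      m.head? = some x → m.getLast? = some y → IsShortest E w x y m)
    (f : V ⊕ (V × V))
    (hf : match f with
      | Sum.inl x => x ∈ p2
      | Sum.inr e0 => e0 ∈ pathEdges ([ki] ++ p2 ++ [ki1]))
    (y : V) (hy : y ∈ [ki] ++ p2 ++ [ki1])
    (hymax : ∀ z ∈ [ki] ++ p2 ++ [ki1],
      min (gdist (removeF E (Sum.inl z)) w u v) (r : ℕ∞) ≤
        min (gdist (removeF E (Sum.inl y)) w u v) (r : ℕ∞)) :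
    min (gdist (removeF E f) w u v) (r : ℕ∞) =
      min (min (min (gdist (removeF E f) w u ki1) (r : ℕ∞) + gdist E w ki1 v)
               (gdist E w u ki + min (gdist (removeF E f) w ki v) (r : ℕ∞)))
          (min (min (gdist (removeF E (Sum.inl y)) w u v) (r : ℕ∞)) (r : ℕ∞)) := by
  obtain ⟨hpw, hpmin⟩ := hshort
  have hnd : p.Nodup := nodup_of_shortest hw ⟨hpw, hpmin⟩
  rw [hp] at hnd
  have hhead := hpw.1
  have hlast := hpw.2.1
  rw [hp] at hhead hlast
  -- head and last facts
  have hheadpref : (p1 ++ [ki]).head? = some u := by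
    rw [← head?_append_cons' p1 ki (p2 ++ [ki1] ++ p3)]
    simpa using hhead
  have hlastsuf : (ki1 :: p3).getLast? = some v := by
    have : ((p1 ++ [ki] ++ p2) ++ ki1 :: p3).getLast? = some v := by simpa using hlast
    rwa [List.getLast?_append_cons] at this
  -- shortest subpaths
  have S1 : IsShortest E w u ki (p1 ++ [ki]) := by
    refine hcons [] (p1 ++ [ki]) (p2 ++ [ki1] ++ p3) (by rw [hp]; simp) u ki hheadpref ?_
    exact List.getLast?_concat
  have S2 : IsShortest E w ki1 v (ki1 :: p3) := by
    refine hcons (p1 ++ [ki] ++ p2) (ki1 :: p3) [] (by rw [hp]; simp) ki1 v rfl hlastsuf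
  have hduki : gdist E w u ki = (wt w (p1 ++ [ki]) : ℕ∞) := gdist_eq_of_shortest S1
  have hdk1v : gdist E w ki1 v = (wt w (ki1 :: p3) : ℕ∞) := gdist_eq_of_shortest S2
  -- u, v not in p2
  have hump2 : u ∉ p2 := by
    have hu : u ∈ p1 ++ [ki] := mem_of_head?_append (B := p2 ++ ki1 :: p3) (by simp) (by simpa using hhead)
    have hnd' : ((p1 ++ [ki]) ++ (p2 ++ ki1 :: p3)).Nodup := by simpa using hnd
    intro hup2
    exact nodup_disj hnd' u hu (by simp [hup2])
  have hvmp2 : v ∉ p2 := by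
    have hnd' : ((p1 ++ [ki] ++ p2) ++ ki1 :: p3).Nodup := by simpa using hnd
    have hv : v ∈ ki1 :: p3 := by
      obtain ⟨ys, hys⟩ := List.getLast?_eq_some_iff.mp hlastsuf
      rw [hys]; simp
    intro hvp2
    exact nodup_disj hnd' v (by simp [hvp2]) hv
  -- the suffix [ki1] ++ p3 avoids f
  have hnds : ((p1 ++ [ki] ++ p2) ++ ki1 :: p3).Nodup := by simpa using hnd
  have hndp : ((p1 ++ [ki]) ++ (p2 ++ ki1 :: p3)).Nodup := by simpa using hnd
  have havoid_suffix : IsWalk (removeF E f) ki1 v (ki1 :: p3) := by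
    cases f with
    | inl x =>
      replace hf : x ∈ p2 := hf
      refine walk_removeF_vertex S2.1 ?_
      exact nodup_disj hnds x (by simp [hf])
    | inr e0 =>
      replace hf : e0 ∈ pathEdges ([ki] ++ p2 ++ [ki1]) := hf
      refine walk_removeF_edge S2.1 ?_
      intro hmem
      have h1 : e0.1 ∈ ki1 :: p3 := (mem_of_pathEdges hmem).1
      have h2 := mem_left_of_pathEdges hf
      have he : [ki] ++ p2 ++ [ki1] = (ki :: p2) ++ [ki1] := by simp
      rw [he, List.dropLast_concat] at h2
      have h3 : e0.1 ∈ p1 ++ [ki] ++ p2 := by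
        rcases List.mem_cons.mp h2 with hh | hh
        · simp [hh]
        · simp [hh]
      exact nodup_disj hnds e0.1 h3 h1
  -- the prefix p1 ++ [ki] avoids f
  have havoid_prefix : IsWalk (removeF E f) u ki (p1 ++ [ki]) := by
    cases f with
    | inl x =>
      replace hf : x ∈ p2 := hf
      refine walk_removeF_vertex S1.1 ?_
      intro hx
      exact nodup_disj hndp x hx (by simp [hf])
    | inr e0 =>
      replace hf : e0 ∈ pathEdges ([ki] ++ p2 ++ [ki1]) := hf
      refine walk_removeF_edge S1.1 ?_
      intro hmem
      have h1 : e0.2 ∈ p1 ++ [ki] := (mem_of_pathEdges hmem).2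
      have h2 := mem_right_of_pathEdges hf
      simp at h2
      have h2' : e0.2 ∈ p2 ++ ki1 :: p3 := by
        rcases h2 with hh | hh
        · simp [hh]
        · simp [hh]
      exact nodup_disj hndp e0.2 h1 h2'
  -- claim: LHS ≤ A
  have hA : min (gdist (removeF E f) w u v) (r : ℕ∞) ≤
      min (gdist (removeF E f) w u ki1) (r : ℕ∞) + gdist E w ki1 v := by
    rcases le_or_gt (r : ℕ∞) (gdist (removeF E f) w u ki1) with hge | hlt
    · rw [min_eq_right hge]
      exact le_trans (min_le_right _ _) le_self_add
    · rw [min_eq_left hlt.le]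
      obtain ⟨Q', hQ', hwtQ'⟩ := gdist_exists (ne_top_of_lt hlt)
      obtain ⟨Q'', rfl⟩ := walk_decomp_last hQ'
      have hw2 : IsWalk (removeF E f) u v (Q'' ++ ki1 :: p3) := walk_join hQ' havoid_suffix
      have hle : gdist (removeF E f) w u v ≤ (wt w (Q'' ++ ki1 :: p3) : ℕ∞) := gdist_le_wt hw2
      rw [wt_split w Q'' ki1 p3] at hle
      push_cast at hle
      rw [hwtQ'] at hle
      calc min (gdist (removeF E f) w u v) (r : ℕ∞) ≤ gdist (removeF E f) w u v :=
            min_le_left _ _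
        _ ≤ _ := by rw [hdk1v]; exact hle
  have hB : min (gdist (removeF E f) w u v) (r : ℕ∞) ≤
      gdist E w u ki + min (gdist (removeF E f) w ki v) (r : ℕ∞) := by
    rcases le_or_gt (r : ℕ∞) (gdist (removeF E f) w ki v) with hge | hlt
    · rw [min_eq_right hge]
      exact le_trans (min_le_right _ _) le_add_self
    · rw [min_eq_left hlt.le]
      obtain ⟨Q', hQ', hwtQ'⟩ := gdist_exists (ne_top_of_lt hlt)
      obtain ⟨Q'', rfl⟩ := walk_decomp_head hQ'
      have hw2 : IsWalk (removeF E f) u v (p1 ++ ki :: Q'') := walk_join havoid_prefix hQ'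
      have hle : gdist (removeF E f) w u v ≤ (wt w (p1 ++ ki :: Q'') : ℕ∞) := gdist_le_wt hw2
      rw [wt_split w p1 ki Q''] at hle
      push_cast at hle
      rw [hwtQ'] at hle
      calc min (gdist (removeF E f) w u v) (r : ℕ∞) ≤ gdist (removeF E f) w u v :=
            min_le_left _ _
        _ ≤ _ := by rw [hduki]; exact hle
  have hC : min (gdist (removeF E f) w u v) (r : ℕ∞) ≤
      min (gdist (removeF E (Sum.inl y)) w u v) (r : ℕ∞) := by
    cases f with
    | inl x =>
      replace hf : x ∈ p2 := hf
      exact hymax x (by simp [hf])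
    | inr e0 =>
      replace hf : e0 ∈ pathEdges ([ki] ++ p2 ++ [ki1]) := hf
      have h2 := mem_left_of_pathEdges hf
      have he : [ki] ++ p2 ++ [ki1] = (ki :: p2) ++ [ki1] := by simp
      rw [he, List.dropLast_concat] at h2
      have hsub : removeF E (Sum.inl e0.1) ⊆ removeF E (Sum.inr e0) := by
        intro e he'
        simp only [removeF, Finset.mem_filter, Finset.mem_erase] at *
        exact ⟨fun hh => he'.2.1 (by rw [hh]), he'.1⟩
      have hmono := gdist_mono hsub w u v
      refine le_trans (min_le_min hmono le_rfl) (hymax e0.1 ?_)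
      rcases List.mem_cons.mp h2 with hh | hh
      · simp [hh]
      · simp [hh]
  refine le_antisymm (le_min (le_min hA hB) (le_min hC (min_le_right _ _))) ?_
  -- RHS ≤ LHS
  rcases le_or_gt (r : ℕ∞) (gdist (removeF E f) w u v) with hge | hlt
  · calc _ ≤ min (min (gdist (removeF E (Sum.inl y)) w u v) (r : ℕ∞)) (r : ℕ∞) :=
        min_le_right _ _
      _ ≤ (r : ℕ∞) := min_le_right _ _
      _ = _ := (min_eq_right hge).symm
  · rw [min_eq_left hlt.le]
    obtain ⟨Q, hQ, hwtQ⟩ := gdist_exists (ne_top_of_lt hlt)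
    by_cases hki1 : ki1 ∈ Q
    · obtain ⟨Q₁, Q₂, rfl⟩ := List.append_of_mem hki1
      have hsb := (split_bound (w := w) (removeF_subset E f) hQ).1
      rw [hwtQ] at hsb
      refine le_trans (le_trans (min_le_left _ _) (min_le_left _ _)) (le_trans ?_ hsb)
      exact add_le_add_left (min_le_left _ _) _
    · by_cases hki : ki ∈ Q
      · obtain ⟨Q₁, Q₂, rfl⟩ := List.append_of_mem hki
        have hsb := (split_bound (w := w) (removeF_subset E f) hQ).2
        rw [hwtQ] at hsb
        refine le_trans (le_trans (min_le_left _ _) (min_le_right _ _)) (le_trans ?_ hsb)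
        exact add_le_add_right (min_le_left _ _) _
      · by_cases hz : ∃ z ∈ p2, z ∈ Q
        · obtain ⟨z, hzp2, hzQ⟩ := hz
          obtain ⟨s1, s2, hp2⟩ := List.append_of_mem hzp2
          obtain ⟨Q₁, Q₂, rfl⟩ := List.append_of_mem hzQ
          obtain ⟨h1, h2⟩ := walk_split hQ
          have hzv : z ≠ v := fun hzv => hvmp2 (hzv ▸ hzp2)
          have hQ₂ne : Q₂ ≠ [] := by
            rintro rfl
            exact hzv (by simpa using h2.2.1)
          obtain ⟨b, t, rfl⟩ : ∃ b t, Q₂ = b :: t := by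
            rcases Q₂ with _ | ⟨b, t⟩
            · exact absurd rfl hQ₂ne
            · exact ⟨b, t, rfl⟩
          have hpz' : p = (p1 ++ ki :: s1) ++ z :: (s2 ++ ki1 :: p3) := by
            rw [hp, hp2]; simp
          have hndz' : ((p1 ++ ki :: s1) ++ z :: (s2 ++ ki1 :: p3)).Nodup := by
            simpa [hp2] using hnd
          have Sz : IsShortest E w u z ((p1 ++ ki :: s1) ++ [z]) := by
            refine hcons [] _ (s2 ++ ki1 :: p3) (by rw [hpz']; simp) u z ?_
              (List.getLast?_concat)
            rw [← head?_append_cons' (p1 ++ ki :: s1) z (s2 ++ ki1 :: p3), ← hpz']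
            exact hpw.1
          have Szv : IsShortest E w z v (z :: (s2 ++ ki1 :: p3)) := by
            refine hcons (p1 ++ ki :: s1) _ [] (by rw [hpz']; simp) z v rfl ?_
            rw [← List.getLast?_append_cons (p1 ++ ki :: s1) z (s2 ++ ki1 :: p3), ← hpz']
            exact hpw.2.1
          have doA : IsWalk (removeF E f) z v (z :: (s2 ++ ki1 :: p3)) →
              min (min (min (gdist (removeF E f) w u ki1) (r : ℕ∞) + gdist E w ki1 v)
                       (gdist E w u ki + min (gdist (removeF E f) w ki v) (r : ℕ∞)))
                  (min (min (gdist (removeF E (Sum.inl y)) w u v) (r : ℕ∞)) (r : ℕ∞)) ≤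
                gdist (removeF E f) w u v := by
            intro hsufw
            have hW : IsWalk (removeF E f) u v ((Q₁ ++ z :: s2) ++ ki1 :: p3) := by
              have hj := walk_join h1 hsufw
              have heq : Q₁ ++ z :: (s2 ++ ki1 :: p3) = (Q₁ ++ z :: s2) ++ ki1 :: p3 := by
                simp
              rwa [heq] at hj
            have hsb := (split_bound (w := w) (removeF_subset E f) hW).1
            have hwle : wt w ((Q₁ ++ z :: s2) ++ ki1 :: p3) ≤ wt w (Q₁ ++ z :: (b :: t)) := by
              have heq : (Q₁ ++ z :: s2) ++ ki1 :: p3 = Q₁ ++ z :: (s2 ++ ki1 :: p3) := by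
                simp
              rw [heq, wt_split w Q₁ z (s2 ++ ki1 :: p3), wt_split w Q₁ z (b :: t)]
              have hs := Szv.2 _ (walk_mono (removeF_subset E f) h2)
              omega
            have hfin : gdist (removeF E f) w u ki1 + gdist E w ki1 v ≤
                gdist (removeF E f) w u v := by
              rw [← hwtQ]
              exact le_trans hsb (by exact_mod_cast hwle)
            refine le_trans (min_le_left _ _) (le_trans (min_le_left _ _) (le_trans ?_ hfin))
            exact add_le_add_left (min_le_left _ _) _
          have doB : IsWalk (removeF E f) u z ((p1 ++ ki :: s1) ++ [z]) →
              min (min (min (gdist (removeF E f) w u ki1) (r : ℕ∞) + gdist E w ki1 v)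
                       (gdist E w u ki + min (gdist (removeF E f) w ki v) (r : ℕ∞)))
                  (min (min (gdist (removeF E (Sum.inl y)) w u v) (r : ℕ∞)) (r : ℕ∞)) ≤
                gdist (removeF E f) w u v := by
            intro hprefw
            have hW : IsWalk (removeF E f) u v (p1 ++ ki :: (s1 ++ z :: (b :: t))) := by
              have hj := walk_join hprefw h2
              have heq : (p1 ++ ki :: s1) ++ z :: (b :: t) =
                  p1 ++ ki :: (s1 ++ z :: (b :: t)) := by simp
              rwa [heq] at hj
            have hsb := (split_bound (w := w) (removeF_subset E f) hW).2
            have hwle : wt w (p1 ++ ki :: (s1 ++ z :: (b :: t))) ≤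
                wt w (Q₁ ++ z :: (b :: t)) := by
              have heq : p1 ++ ki :: (s1 ++ z :: (b :: t)) =
                  (p1 ++ ki :: s1) ++ z :: (b :: t) := by simp
              rw [heq, wt_split w (p1 ++ ki :: s1) z (b :: t), wt_split w Q₁ z (b :: t)]
              have hs := Sz.2 _ (walk_mono (removeF_subset E f) h1)
              omega
            have hfin : gdist E w u ki + gdist (removeF E f) w ki v ≤
                gdist (removeF E f) w u v := by
              rw [← hwtQ]
              exact le_trans hsb (by exact_mod_cast hwle)
            refine le_trans (min_le_left _ _) (le_trans (min_le_right _ _) (le_trans ?_ hfin))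
            exact add_le_add_right (min_le_left _ _) _
          cases f with
          | inl x =>
            replace hf : x ∈ p2 := hf
            have hzx : z ≠ x := by
              have hedge : (z, b) ∈ removeF E (Sum.inl x) := (List.isChain_cons_cons.mp h2.2.2).1
              simp only [removeF, Finset.mem_filter] at hedge
              exact hedge.2.1
            rw [hp2] at hf
            rcases List.mem_append.mp hf with hxs1 | hxz
            · refine doA (walk_removeF_vertex Szv.1 fun hxmem => ?_)
              exact nodup_disj hndz' x (by simp [hxs1]) hxmem
            · rcases List.mem_cons.mp hxz with heq2 | hxs2
              · exact absurd heq2.symm hzx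
              · refine doB (walk_removeF_vertex Sz.1 fun hxmem => ?_)
                have hxmem' : x ∈ (p1 ++ ki :: s1) ++ [z] := hxmem
                rcases List.mem_append.mp hxmem' with hh | hh
                · exact nodup_disj hndz' x hh (by simp [hxs2])
                · have hxz' : x = z := by simpa using hh
                  exact hzx hxz'.symm
          | inr e0 =>
            replace hf : e0 ∈ pathEdges ([ki] ++ p2 ++ [ki1]) := hf
            have hseg : [ki] ++ p2 ++ [ki1] = (ki :: s1) ++ z :: (s2 ++ [ki1]) := by
              simp [hp2]
            rw [hseg, pathEdges_append] at hf
            rcases List.mem_append.mp hf with hbefore | hafter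
            · have he1 : e0.1 ∈ ki :: s1 := by
                have hm := mem_left_of_pathEdges hbefore
                rwa [List.dropLast_concat] at hm
              refine doA (walk_removeF_edge Szv.1 fun hmem => ?_)
              have hm2 : e0.1 ∈ z :: (s2 ++ ki1 :: p3) := (mem_of_pathEdges hmem).1
              have hleft : e0.1 ∈ p1 ++ ki :: s1 := by
                rcases List.mem_cons.mp he1 with hh | hh
                · simp [hh]
                · simp [hh]
              exact nodup_disj hndz' e0.1 hleft hm2
            · have he1 : e0.1 ∈ z :: s2 := by
                have hm := mem_left_of_pathEdges hafter
                rwa [show z :: (s2 ++ [ki1]) = (z :: s2) ++ [ki1] by simp,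
                  List.dropLast_concat] at hm
              refine doB (walk_removeF_edge Sz.1 fun hmem => ?_)
              have hm2 := mem_left_of_pathEdges hmem
              rw [List.dropLast_concat] at hm2
              have hright : e0.1 ∈ z :: (s2 ++ ki1 :: p3) := by
                rcases List.mem_cons.mp he1 with hh | hh
                · simp [hh]
                · simp [hh]
              exact nodup_disj hndz' e0.1 hm2 hright
        · push_neg at hz
          have hyQ : y ∉ Q := by
            intro hyy
            rcases (by simpa using hy : y = ki ∨ y ∈ p2 ∨ y = ki1) with rfl | hh | rfl
            · exact hki hyy
            · exact hz y hh hyy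
            · exact hki1 hyy
          have hwalk : IsWalk (removeF E (Sum.inl y)) u v Q :=
            walk_removeF_vertex (walk_mono (removeF_subset E f) hQ) hyQ
          have hdy : gdist (removeF E (Sum.inl y)) w u v ≤ gdist (removeF E f) w u v := by
            rw [← hwtQ]; exact gdist_le_wt hwalk
          refine le_trans (min_le_right _ _) (le_trans (min_le_left _ _) ?_)
          exact le_trans (min_le_left _ _) hdy
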